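/- Let $\phi^1(t)$ have coefficients $C^w(\phi^1(t)) = \frac{\lambda_w}{n!}(t/2)^n$ for words $w$ of length $2n$ with all letters occurring an even number of times, $0$ otherwise, where $0 < \lambda_w \le 1$ and $\lambda_w = 1$ when $w$ is a concatenation of squares $e_{i_1}^2\cdots e_{i_n}^2$. Set $\phi^M(T) = \phi^1(T/M)^{\otimes M}$. Then for every word $w = e_{i_1}^2\cdots e_{i_n}^2$ that is a concatenation of $n$ squares, $C^w(\phi^M(T)) \le \frac{1}{n!}(T/2)^n$. -/

import Mathlib

open scoped Classical

noncomputable def gaussMoment (t : ℝ) (m : ℕ) : ℝ :=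
  if Even m then (Nat.factorial m : ℝ) / (2 ^ (m / 2) * (Nat.factorial (m / 2) : ℝ)) * t ^ (m / 2)
  else 0

noncomputable def phiOne (d : ℕ) (t : ℝ) : List (Fin d) → ℝ :=
  fun w => (1 / (Nat.factorial w.length : ℝ)) * ∏ k : Fin d, gaussMoment t (w.count k)

noncomputable def mulC {d : ℕ} (C D : List (Fin d) → ℝ) : List (Fin d) → ℝ :=
  fun w => ∑ k ∈ Finset.range (w.length + 1), C (w.take k) * D (w.drop k)

noncomputable def powC {d : ℕ} (C : List (Fin d) → ℝ) : ℕ → List (Fin d) → ℝ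
  | 0 => fun w => if w = [] then 1 else 0
  | k + 1 => mulC C (powC C k)

lemma gauss_nonneg {t : ℝ} (ht : 0 ≤ t) (m : ℕ) : 0 ≤ gaussMoment t m := by
  unfold gaussMoment; split
  · positivity
  · exact le_refl 0

lemma gauss_even (t : ℝ) (c : ℕ) :
    gaussMoment t (2 * c) = ((2 * c).factorial : ℝ) / (2 ^ c * (c.factorial : ℝ)) * t ^ c := by
  unfold gaussMoment
  rw [if_pos ⟨c, two_mul c⟩]
  norm_num [Nat.mul_div_cancel_left]

lemma gauss_odd (t : ℝ) {m : ℕ} (hm : ¬ Even m) : gaussMoment t m = 0 := by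
  unfold gaussMoment; rw [if_neg hm]

lemma sum_count {d : ℕ} (l : List (Fin d)) : ∑ k : Fin d, l.count k = l.length := by
  induction l with
  | nil => simp
  | cons a t ih =>
    simp only [List.count_cons, List.length_cons, Finset.sum_add_distrib, ih]
    simp [Finset.sum_ite_eq]

lemma count_flatMap {d : ℕ} (l : List (Fin d)) (k : Fin d) :
    (l.flatMap (fun j => [j, j])).count k = 2 * l.count k := by
  induction l with
  | nil => simp
  | cons a t ih =>
    simp only [List.flatMap_cons, List.count_append, List.count_cons, ih]
    by_cases h : a = k <;> simp [h, List.count_cons] <;> ring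

lemma length_flatMap {d : ℕ} (l : List (Fin d)) :
    (l.flatMap (fun j => [j, j])).length = 2 * l.length := by
  induction l with
  | nil => simp
  | cons a t ih => simp [List.flatMap_cons, ih]; ring

lemma take_flatMap {d : ℕ} (l : List (Fin d)) (j : ℕ) :
    (l.flatMap (fun j => [j, j])).take (2 * j) = (l.take j).flatMap (fun j => [j, j]) := by
  induction l generalizing j with
  | nil => simp
  | cons a t ih =>
    cases j with
    | zero => simp
    | succ j =>
      simp only [List.flatMap_cons, List.take_succ_cons]
      rw [show 2 * (j + 1) = ((2 * j) + 1) + 1 by ring]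
      simp [List.take_succ_cons, ih]

lemma drop_flatMap {d : ℕ} (l : List (Fin d)) (j : ℕ) :
    (l.flatMap (fun j => [j, j])).drop (2 * j) = (l.drop j).flatMap (fun j => [j, j]) := by
  induction l generalizing j with
  | nil => simp
  | cons a t ih =>
    cases j with
    | zero => simp
    | succ j =>
      simp only [List.flatMap_cons, List.drop_succ_cons]
      rw [show 2 * (j + 1) = ((2 * j) + 1) + 1 by ring]
      simp [List.drop_succ_cons, ih]

lemma phiOne_nonneg {d : ℕ} {t : ℝ} (ht : 0 ≤ t) (w : List (Fin d)) : 0 ≤ phiOne d t w := by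
  unfold phiOne
  have : 0 ≤ ∏ k : Fin d, gaussMoment t (w.count k) :=
    Finset.prod_nonneg fun k _ => gauss_nonneg ht _
  positivity

lemma powC_nonneg {d : ℕ} {t : ℝ} (ht : 0 ≤ t) (m : ℕ) (w : List (Fin d)) :
    0 ≤ powC (phiOne d t) m w := by
  induction m generalizing w with
  | zero => unfold powC; split <;> norm_num
  | succ m ih =>
    unfold powC mulC
    exact Finset.sum_nonneg fun k _ => mul_nonneg (phiOne_nonneg ht _) (ih _)

lemma phiOne_odd {d : ℕ} {t : ℝ} {w : List (Fin d)} (hw : ¬ Even w.length) :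
    phiOne d t w = 0 := by
  unfold phiOne
  have : ∃ k : Fin d, ¬ Even (w.count k) := by
    by_contra h
    push_neg at h
    have : Even (∑ k : Fin d, w.count k) := Finset.even_sum (s := Finset.univ) (f := fun k => w.count k) (fun k _ => h k)
    rw [sum_count] at this; exact hw this
  obtain ⟨k, hk⟩ := this
  rw [Finset.prod_eq_zero (Finset.mem_univ k) (gauss_odd t hk), mul_zero]

-- from file a
lemma choose_double_le (x y : ℕ) : (x + y).choose x ≤ (2 * (x + y)).choose (2 * x) := by
  have h : (2 * (x + y)).choose (2 * x) = ∑ ij ∈ Finset.HasAntidiagonal.antidiagonal (2 * x),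
      (x + y).choose ij.1 * (x + y).choose ij.2 := by
    rw [two_mul (x + y), Nat.add_choose_eq]
  rw [h]
  have hmem : (x, x) ∈ Finset.HasAntidiagonal.antidiagonal (2 * x) := by
    simp [Finset.mem_antidiagonal]; omega
  calc (x + y).choose x ≤ (x + y).choose x * (x + y).choose x :=
        Nat.le_mul_of_pos_left _ (Nat.choose_pos (by omega))
    _ ≤ _ := Finset.single_le_sum (f := fun ij => (x + y).choose ij.1 * (x + y).choose ij.2)
        (fun _ _ => Nat.zero_le _) hmem

lemma fact_pair (x y : ℕ) :
    (2 * x).factorial * (2 * y).factorial * (x + y).factorial ≤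
      (2 * (x + y)).factorial * x.factorial * y.factorial := by
  have h1 := Nat.choose_mul_factorial_mul_factorial (show x ≤ x + y by omega)
  have h2 := Nat.choose_mul_factorial_mul_factorial (show 2 * x ≤ 2 * (x + y) by omega)
  have h3 : x + y - x = y := by omega
  have h4 : 2 * (x + y) - 2 * x = 2 * y := by omega
  rw [h3] at h1; rw [h4] at h2
  calc (2 * x).factorial * (2 * y).factorial * (x + y).factorial
      = (x + y).choose x * x.factorial * y.factorial * ((2 * x).factorial * (2 * y).factorial) := by
        rw [h1]; ring
    _ ≤ (2 * (x + y)).choose (2 * x) * x.factorial * y.factorial * ((2 * x).factorial * (2 * y).factorial) := by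
        have := choose_double_le x y
        gcongr
    _ = (2 * (x + y)).factorial * x.factorial * y.factorial := by rw [← h2]; ring

lemma prod_fact {ι : Type*} (s : Finset ι) (c : ι → ℕ) :
    (∏ k ∈ s, (2 * c k).factorial) * (∑ k ∈ s, c k).factorial ≤
      (2 * ∑ k ∈ s, c k).factorial * ∏ k ∈ s, (c k).factorial := by
  classical
  induction s using Finset.induction_on with
  | empty => simp
  | @insert a s ha ih =>
    rw [Finset.prod_insert ha, Finset.prod_insert ha, Finset.sum_insert ha]
    set b := ∑ k ∈ s, c k with hb
    have hpos : 0 < b.factorial := Nat.factorial_pos _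
    have step : ((2 * c a).factorial * ∏ k ∈ s, (2 * c k).factorial) * (c a + b).factorial * b.factorial ≤
        (2 * (c a + b)).factorial * ((c a).factorial * ∏ k ∈ s, (c k).factorial) * b.factorial := by
      calc ((2 * c a).factorial * ∏ k ∈ s, (2 * c k).factorial) * (c a + b).factorial * b.factorial
          = (2 * c a).factorial * (c a + b).factorial * ((∏ k ∈ s, (2 * c k).factorial) * b.factorial) := by ring
        _ ≤ (2 * c a).factorial * (c a + b).factorial * ((2 * b).factorial * ∏ k ∈ s, (c k).factorial) := by gcongr
        _ = ((2 * c a).factorial * (2 * b).factorial * (c a + b).factorial) * ∏ k ∈ s, (c k).factorial := by ring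
        _ ≤ ((2 * (c a + b)).factorial * (c a).factorial * b.factorial) * ∏ k ∈ s, (c k).factorial :=
              Nat.mul_le_mul_right _ (fact_pair (c a) b)
        _ = (2 * (c a + b)).factorial * ((c a).factorial * ∏ k ∈ s, (c k).factorial) * b.factorial := by ring
    exact Nat.le_of_mul_le_mul_right step hpos

lemma phiOne_bound {d : ℕ} {t : ℝ} (ht : 0 ≤ t) (l : List (Fin d)) :
    phiOne d t (l.flatMap (fun j => [j, j])) ≤
      (t / 2) ^ l.length / (l.length.factorial : ℝ) := by
  set n := l.length with hn
  have hlen := length_flatMap l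
  unfold phiOne
  simp only [hlen, ← hn]
  have hc : ∀ k : Fin d, (l.flatMap (fun j => [j, j])).count k = 2 * l.count k :=
    count_flatMap l
  simp only [hc, gauss_even]
  rw [Finset.prod_mul_distrib, Finset.prod_div_distrib, Finset.prod_mul_distrib,
    Finset.prod_pow_eq_pow_sum, Finset.prod_pow_eq_pow_sum, sum_count]
  set P : ℕ := ∏ k : Fin d, (2 * l.count k).factorial with hP
  set Q : ℕ := ∏ k : Fin d, (l.count k).factorial with hQ
  have hcastP : ∏ k : Fin d, ((2 * l.count k).factorial : ℝ) = (P : ℝ) := by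
    rw [hP]; push_cast; ring
  have hcastQ : ∏ k : Fin d, ((l.count k).factorial : ℝ) = (Q : ℝ) := by
    rw [hQ]; push_cast; ring
  rw [hcastP, hcastQ]
  have hkey : (P : ℝ) * n.factorial ≤ ((2 * n).factorial : ℝ) * Q := by
    have := prod_fact (Finset.univ : Finset (Fin d)) (fun k => l.count k)
    rw [sum_count] at this
    exact_mod_cast this
  have h1 : (0:ℝ) < ((2*n).factorial : ℝ) := by exact_mod_cast Nat.factorial_pos _
  have h2 : (0:ℝ) < (Q : ℝ) := by
    have : 0 < Q := Finset.prod_pos fun k _ => Nat.factorial_pos _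
    exact_mod_cast this
  have h3 : (0:ℝ) < (n.factorial : ℝ) := by exact_mod_cast Nat.factorial_pos _
  have hfrac : (P : ℝ) / (((2*n).factorial : ℝ) * Q) ≤ 1 / (n.factorial : ℝ) := by
    rw [div_le_div_iff₀ (by positivity) h3]
    nlinarith [hkey]
  calc (1 / ((2*n).factorial : ℝ)) * ((P : ℝ) / (2 ^ n * Q) * t ^ n)
      = (t ^ n / 2 ^ n) * ((P : ℝ) / (((2*n).factorial : ℝ) * Q)) := by
        field_simp
    _ ≤ (t ^ n / 2 ^ n) * (1 / (n.factorial : ℝ)) := by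
        apply mul_le_mul_of_nonneg_left hfrac (by positivity)
    _ = (t / 2) ^ n / (n.factorial : ℝ) := by
        rw [div_pow]; ring

lemma binom_sum (x : ℝ) (m n : ℕ) :
    ∑ j ∈ Finset.range (n + 1),
      (x ^ j / (j.factorial : ℝ)) * ((m * x) ^ (n - j) / ((n - j).factorial : ℝ)) =
      ((m + 1 : ℝ) * x) ^ n / (n.factorial : ℝ) := by
  rw [show ((m : ℝ) + 1) * x = x + m * x by ring, add_pow, Finset.sum_div]
  refine Finset.sum_congr rfl fun j hj => ?_
  have hjn : j ≤ n := Nat.lt_succ_iff.mp (Finset.mem_range.mp hj)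
  rw [Nat.cast_choose ℝ hjn]
  have h1 : (j.factorial : ℝ) ≠ 0 := by exact_mod_cast (Nat.factorial_pos j).ne'
  have h2 : ((n - j).factorial : ℝ) ≠ 0 := by exact_mod_cast (Nat.factorial_pos _).ne'
  have h3 : (n.factorial : ℝ) ≠ 0 := by exact_mod_cast (Nat.factorial_pos n).ne'
  field_simp

lemma powC_bound {d : ℕ} {t : ℝ} (ht : 0 ≤ t) (m : ℕ) (l : List (Fin d)) :
    powC (phiOne d t) m (l.flatMap (fun j => [j, j])) ≤
      ((m : ℝ) * (t / 2)) ^ l.length / (l.length.factorial : ℝ) := by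
  induction m generalizing l with
  | zero =>
    cases l with
    | nil => simp [powC]
    | cons a s =>
      have : (a :: s).flatMap (fun j => [j, j]) ≠ [] := by simp
      simp only [powC, if_neg this]
      have : ((0:ℕ) : ℝ) * (t / 2) = 0 := by norm_num
      rw [this]
      rw [zero_pow (by simp)]
      positivity
  | succ m ih =>
    set n := l.length with hn
    have hlen := length_flatMap l
    set w := l.flatMap (fun j => [j, j]) with hw
    show mulC (phiOne d t) (powC (phiOne d t) m) w ≤ _
    unfold mulC
    rw [hlen, ← hn]
    set f : ℕ → ℝ := fun k => phiOne d t (w.take k) * powC (phiOne d t) m (w.drop k) with hf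
    have hzero : ∀ k ∈ Finset.range (2 * n + 1), f k ≠ 0 → Even k := by
      intro k hk hne
      by_contra hodd
      apply hne
      have hkle : k ≤ 2 * n := Nat.lt_succ_iff.mp (Finset.mem_range.mp hk)
      have hlt : (w.take k).length = k := by
        rw [List.length_take, hlen]; omega
      have : phiOne d t (w.take k) = 0 := phiOne_odd (by rw [hlt]; exact hodd)
      simp [hf, this]
    have hfilter : ∑ k ∈ Finset.range (2 * n + 1), f k
        = ∑ k ∈ (Finset.range (2 * n + 1)).filter (fun k => Even k), f k :=
      (Finset.sum_filter_of_ne hzero).symm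
    have himg : (Finset.range (2 * n + 1)).filter (fun k => Even k)
        = (Finset.range (n + 1)).image (fun j => 2 * j) := by
      ext k
      simp only [Finset.mem_filter, Finset.mem_range, Finset.mem_image, Nat.even_iff]
      constructor
      · rintro ⟨h1, h2⟩
        exact ⟨k / 2, by omega, by omega⟩
      · rintro ⟨j, hj, rfl⟩
        omega
    have hinj : Set.InjOn (fun j => 2 * j) ((Finset.range (n+1)) : Set ℕ) := by
      intro a _ b _ h; simpa using h
    rw [hfilter, himg, Finset.sum_image (fun a ha b hb h => hinj ha hb h)]
    have hbound : ∀ j ∈ Finset.range (n + 1),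
        f (2 * j) ≤ ((t/2) ^ j / (j.factorial : ℝ)) *
          (((m : ℝ) * (t/2)) ^ (n - j) / ((n - j).factorial : ℝ)) := by
      intro j hj
      have hjn : j ≤ n := Nat.lt_succ_iff.mp (Finset.mem_range.mp hj)
      have htake : w.take (2 * j) = (l.take j).flatMap (fun j => [j, j]) := take_flatMap l j
      have hdrop : w.drop (2 * j) = (l.drop j).flatMap (fun j => [j, j]) := drop_flatMap l j
      have hlt : (l.take j).length = j := by rw [List.length_take]; omega
      have hld : (l.drop j).length = n - j := by rw [List.length_drop]
      have h1 : phiOne d t (w.take (2 * j)) ≤ (t/2) ^ j / (j.factorial : ℝ) := by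
        rw [htake]
        have := phiOne_bound ht (l.take j)
        rwa [hlt] at this
      have h2 : powC (phiOne d t) m (w.drop (2 * j)) ≤
          ((m : ℝ) * (t/2)) ^ (n - j) / ((n - j).factorial : ℝ) := by
        rw [hdrop]
        have := ih (l.drop j)
        rwa [hld] at this
      exact mul_le_mul h1 h2 (powC_nonneg ht m _) (by positivity)
    calc ∑ j ∈ Finset.range (n + 1), f (2 * j)
        ≤ ∑ j ∈ Finset.range (n + 1), ((t/2) ^ j / (j.factorial : ℝ)) *
            (((m : ℝ) * (t/2)) ^ (n - j) / ((n - j).factorial : ℝ)) :=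
          Finset.sum_le_sum hbound
      _ = (((m : ℝ) + 1) * (t/2)) ^ n / (n.factorial : ℝ) := binom_sum (t/2) m n
      _ = (((m + 1 : ℕ) : ℝ) * (t/2)) ^ n / (n.factorial : ℝ) := by push_cast; ring

/-- For every word `w = e_{i₁}² ⋯ e_{i_n}²` that is a concatenation of `n` squares,
the coefficient of `w` in `φ^M(T) = φ¹(T/M)^{⊗M}` is at most `(1/n!)(T/2)^n`. -/
theorem stmt13 (d n M : ℕ) (hM : 1 ≤ M) (T : ℝ) (hT : 0 ≤ T)
    (l : List (Fin d)) (hl : l.length = n) :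
    powC (phiOne d (T / M)) M (l.flatMap (fun j => [j, j])) ≤
      (T / 2) ^ n / (Nat.factorial n : ℝ) := by
  have hM0 : ((M : ℝ)) ≠ 0 := by positivity
  have ht : (0:ℝ) ≤ T / M := by positivity
  have := powC_bound (d := d) ht M l
  rw [hl] at this
  have heq : ((M : ℝ)) * (T / M / 2) = T / 2 := by field_simp
  rwa [heq] at this
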